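/- The unique continuous solution Υ of Υ(τ) = e^{-τ} + (ω/2)∫_0^κ Υ(τ')E₁(|τ-τ'|)dτ' with 0 ≤ ω < 1 satisfies Υ(τ) ≥ e^{-τ} > 0 for all τ ∈ [0, κ], i.e., scattering only increases the total intensity above the Lambert–Beer prediction. -/

import Mathlib

open MeasureTheory Set Real
open scoped ENNReal

private noncomputable def E1aux (x : ℝ) : ℝ := ∫ t in Set.Ioi (1:ℝ), Real.exp (-x * t) / t

private lemma E1aux_nonneg (x : ℝ) : 0 ≤ E1aux x := by
  apply setIntegral_nonneg measurableSet_Ioi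
  intro t ht
  exact div_nonneg (exp_pos _).le (le_trans zero_le_one (le_of_lt ht))

private lemma E1aux_meas : StronglyMeasurable E1aux := by
  have : StronglyMeasurable fun p : ℝ × ℝ => Real.exp (-p.1 * p.2) / p.2 :=
    ((measurable_fst.neg.mul measurable_snd).exp.div measurable_snd).stronglyMeasurable
  exact this.integral_prod_right'

private lemma exp_abs_integrable {t : ℝ} (ht : 0 < t) :
    Integrable (fun s : ℝ => Real.exp (-t * |s|)) := by
  have hIoi : IntegrableOn (fun s : ℝ => Real.exp (-t * |s|)) (Ioi 0) :=
    (exp_neg_integrableOn_Ioi 0 ht).congr_fun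
      (fun s hs => by rw [abs_of_pos hs]) measurableSet_Ioi
  have hIic : IntegrableOn (fun s : ℝ => Real.exp (-t * |s|)) (Iic 0) := by
    rw [← Measure.map_neg_eq_self (volume : Measure ℝ)]
    have m : MeasurableEmbedding fun x : ℝ => -x := (Homeomorph.neg ℝ).measurableEmbedding
    rw [m.integrableOn_map_iff]
    simp_rw [Function.comp_def, abs_neg, neg_preimage, neg_Iic, neg_zero]
    exact Iff.mpr integrableOn_Ici_iff_integrableOn_Ioi hIoi
  have := hIic.union hIoi
  rwa [Iic_union_Ioi, integrableOn_univ] at this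

private lemma exp_abs_integral {t : ℝ} (ht : 0 < t) :
    ∫ s : ℝ, Real.exp (-t * |s|) = 2 / t := by
  have h1 : ∫ s : ℝ, Real.exp (-t * |s|) = 2 * ∫ x in Ioi (0:ℝ), Real.exp (-t * x) :=
    integral_comp_abs (f := fun x => Real.exp (-t * x))
  have h2 : ∫ x in Ioi (0:ℝ), Real.exp (-t * x) = t⁻¹ := by
    have := integral_comp_mul_left_Ioi (fun x => Real.exp (-x)) 0 ht
    simp only [mul_zero, smul_eq_mul] at this
    rw [show (fun x : ℝ => Real.exp (-t * x)) = fun x => Real.exp (-(t * x)) by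
      funext x; ring_nf]
    rw [this, integral_exp_neg_Ioi_zero, mul_one]
  rw [h1, h2]
  ring

private lemma lint_bound :
    ∫⁻ s : ℝ, ENNReal.ofReal (E1aux |s|) ≤ 2 := by
  have meas : AEMeasurable (Function.uncurry fun s t : ℝ =>
      ENNReal.ofReal (Real.exp (-|s| * t) / t))
      ((volume : Measure ℝ).prod ((volume : Measure ℝ).restrict (Ioi 1))) := by
    apply Measurable.aemeasurable
    exact ((((measurable_fst.abs.neg.mul measurable_snd).exp).div
      measurable_snd)).ennreal_ofReal
  calc ∫⁻ s : ℝ, ENNReal.ofReal (E1aux |s|)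
      ≤ ∫⁻ s : ℝ, ∫⁻ t in Ioi (1:ℝ), ENNReal.ofReal (Real.exp (-|s| * t) / t) := by
        apply lintegral_mono
        intro s
        dsimp only
        by_cases h : IntegrableOn (fun t => Real.exp (-|s| * t) / t) (Ioi 1)
        · rw [show E1aux |s| = ∫ t in Set.Ioi (1:ℝ), Real.exp (-|s| * t) / t from rfl,
            ofReal_integral_eq_lintegral_ofReal h
            ((ae_restrict_mem measurableSet_Ioi).mono fun t ht =>
              div_nonneg (exp_pos _).le (le_trans zero_le_one (le_of_lt ht)))]
        · rw [show E1aux |s| = ∫ t in Set.Ioi (1:ℝ), Real.exp (-|s| * t) / t from rfl,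
            integral_undef h]; simp
    _ = ∫⁻ t in Ioi (1:ℝ), ∫⁻ s : ℝ, ENNReal.ofReal (Real.exp (-|s| * t) / t) :=
        lintegral_lintegral_swap meas
    _ = ∫⁻ t in Ioi (1:ℝ), ENNReal.ofReal (2 / t ^ 2) := by
        apply setLIntegral_congr_fun measurableSet_Ioi
        intro t ht
        beta_reduce
        have ht0 : 0 < t := lt_trans one_pos ht
        have hi : Integrable (fun s : ℝ => Real.exp (-|s| * t) / t) := by
          have := (exp_abs_integrable ht0).div_const t
          refine this.congr (Filter.Eventually.of_forall fun s => ?_)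
          show Real.exp (-t * |s|) / t = Real.exp (-|s| * t) / t
          rw [show -t * |s| = -|s| * t by ring]
        rw [← ofReal_integral_eq_lintegral_ofReal hi
          (Filter.Eventually.of_forall fun s =>
            div_nonneg (exp_pos _).le ht0.le)]
        congr 1
        have : ∫ s : ℝ, Real.exp (-|s| * t) / t = (∫ s : ℝ, Real.exp (-t * |s|)) / t := by
          rw [← integral_div]
          congr 1; funext s; rw [show -t * |s| = -|s| * t by ring]
        rw [this, exp_abs_integral ht0]
        ring
    _ = ENNReal.ofReal (∫ t in Ioi (1:ℝ), 2 / t ^ 2) := by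
        rw [ofReal_integral_eq_lintegral_ofReal]
        · have h0 : IntegrableOn (fun t : ℝ => t ^ (-2 : ℝ)) (Ioi 1) :=
            integrableOn_Ioi_rpow_of_lt (by norm_num) one_pos
          refine IntegrableOn.congr_fun (h0.const_mul 2) (fun t ht => ?_) measurableSet_Ioi
          have ht0 : 0 < t := lt_trans one_pos ht
          show 2 * t ^ (-2 : ℝ) = 2 / t ^ 2
          rw [rpow_neg ht0.le, show (-2 : ℝ) = -((2:ℕ):ℝ) by norm_num] at *
          field_simp
          norm_cast
        · exact (ae_restrict_mem measurableSet_Ioi).mono fun t ht =>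
            div_nonneg (by norm_num) (sq_nonneg t)
    _ ≤ 2 := by
        have hval : ∫ t in Ioi (1:ℝ), 2 / t ^ 2 = 2 := by
          have h : ∫ t in Ioi (1:ℝ), 2 / t ^ 2 = 2 * ∫ t in Ioi (1:ℝ), t ^ (-2 : ℝ) := by
            rw [← integral_const_mul]
            refine setIntegral_congr_fun measurableSet_Ioi (fun t ht => ?_)
            have ht0 : 0 < t := lt_trans one_pos ht
            rw [rpow_neg ht0.le, show (2:ℝ) = ((2:ℕ):ℝ) by norm_num, rpow_natCast]
            field_simp
          rw [h, integral_Ioi_rpow_of_lt (by norm_num) one_pos]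
          norm_num
        rw [hval]
        simp

private lemma g_meas : AEStronglyMeasurable (fun s : ℝ => E1aux |s|) volume :=
  (E1aux_meas.comp_measurable measurable_abs).aestronglyMeasurable

private lemma g_integrable : Integrable (fun s : ℝ => E1aux |s|) := by
  refine ⟨g_meas, ?_⟩
  rw [hasFiniteIntegral_iff_ofReal (Filter.Eventually.of_forall fun s => E1aux_nonneg _)]
  exact lt_of_le_of_lt lint_bound (by norm_num)

private lemma g_integral_le : ∫ s : ℝ, E1aux |s| ≤ 2 := by
  rw [integral_eq_lintegral_of_nonneg_ae (Filter.Eventually.of_forall fun s => E1aux_nonneg _)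
    g_meas]
  calc (∫⁻ s : ℝ, ENNReal.ofReal (E1aux |s|)).toReal
      ≤ (2 : ℝ≥0∞).toReal := ENNReal.toReal_mono (by norm_num) lint_bound
    _ = 2 := by norm_num

private lemma g_shift_integrable (τ₀ : ℝ) :
    Integrable (fun τ' : ℝ => E1aux |τ₀ - τ'|) := by
  have h := g_integrable.comp_sub_right τ₀
  refine h.congr (Filter.Eventually.of_forall fun τ' => ?_)
  show E1aux |τ' - τ₀| = E1aux |τ₀ - τ'|
  rw [abs_sub_comm]

private lemma g_shift_interval_le {κ : ℝ} (hκ : 0 ≤ κ) (τ₀ : ℝ) :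
    ∫ τ' in (0:ℝ)..κ, E1aux |τ₀ - τ'| ≤ 2 := by
  rw [intervalIntegral.integral_of_le hκ]
  calc ∫ τ' in Ioc (0:ℝ) κ, E1aux |τ₀ - τ'|
      ≤ ∫ τ' : ℝ, E1aux |τ₀ - τ'| :=
        setIntegral_le_integral (g_shift_integrable τ₀)
          (Filter.Eventually.of_forall fun τ' => E1aux_nonneg _)
    _ = ∫ s : ℝ, E1aux |s| := by
        have h := integral_sub_right_eq_self (μ := volume) (fun s : ℝ => E1aux |s|) τ₀
        rw [← h]
        congr 1; funext τ'; rw [abs_sub_comm]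
    _ ≤ 2 := g_integral_le

/-- Any continuous solution of the Fredholm equation
`Υ(τ) = e^{-τ} + (ω/2)∫_0^κ Υ(τ')E₁(|τ-τ'|)dτ'` with `0 ≤ ω < 1` satisfies
`Υ(τ) ≥ e^{-τ} > 0` on `[0,κ]`: scattering only increases the intensity above
the Lambert–Beer prediction. -/
theorem stmt_7 (ω κ : ℝ) (hω0 : 0 ≤ ω) (hω1 : ω < 1) (hκ : 0 < κ)
    (E₁ : ℝ → ℝ) (hE : E₁ = fun x => ∫ t in Set.Ioi (1:ℝ), Real.exp (-x * t) / t)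
    (Υ : ℝ → ℝ) (hΥc : ContinuousOn Υ (Set.Icc 0 κ))
    (hΥ : ∀ τ ∈ Set.Icc (0:ℝ) κ,
      Υ τ = Real.exp (-τ) + ω/2 * ∫ τ' in (0:ℝ)..κ, Υ τ' * E₁ (abs (τ - τ'))) :
    ∀ τ ∈ Set.Icc (0:ℝ) κ, Real.exp (-τ) ≤ Υ τ ∧ 0 < Real.exp (-τ) := by
  have hE' : E₁ = E1aux := hE
  subst hE'
  obtain ⟨τ₀, hτ₀, hmin⟩ := isCompact_Icc.exists_isMinOn
    ⟨0, left_mem_Icc.2 hκ.le⟩ hΥc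
  have hmin' : ∀ x ∈ Icc (0:ℝ) κ, Υ τ₀ ≤ Υ x := fun x hx => hmin hx
  have hm : 0 ≤ Υ τ₀ := by
    by_contra hneg
    push_neg at hneg
    have heq := hΥ τ₀ hτ₀
    set I := ∫ τ' in (0:ℝ)..κ, Υ τ' * E1aux |τ₀ - τ'| with hI
    by_cases hi : IntervalIntegrable (fun τ' => Υ τ' * E1aux |τ₀ - τ'|) volume 0 κ
    · set J := ∫ τ' in (0:ℝ)..κ, E1aux |τ₀ - τ'| with hJ
      have hJint : IntervalIntegrable (fun τ' => E1aux |τ₀ - τ'|) volume 0 κ :=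
        (g_shift_integrable τ₀).intervalIntegrable
      have hJ2 : J ≤ 2 := g_shift_interval_le hκ.le τ₀
      have hIlow : Υ τ₀ * J ≤ I := by
        rw [hJ, ← intervalIntegral.integral_const_mul]
        refine intervalIntegral.integral_mono_on hκ.le (hJint.const_mul _) hi
          (fun u hu => ?_)
        exact mul_le_mul_of_nonneg_right (hmin' u hu) (E1aux_nonneg _)
      have hexp : 0 < Real.exp (-τ₀) := Real.exp_pos _
      nlinarith [mul_nonneg (mul_nonneg hω0 (neg_nonneg.2 hneg.le))
          (sub_nonneg.2 hJ2),
        mul_pos (sub_pos.2 hω1) (neg_pos.2 hneg)]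
    · have hI0 : I = 0 := intervalIntegral.integral_undef hi
      rw [hI0] at heq
      have := Real.exp_pos (-τ₀)
      linarith
  intro τ hτ
  refine ⟨?_, Real.exp_pos _⟩
  rw [hΥ τ hτ]
  have hnn : 0 ≤ ∫ τ' in (0:ℝ)..κ, Υ τ' * E1aux |τ - τ'| :=
    intervalIntegral.integral_nonneg hκ.le
      (fun u hu => mul_nonneg (le_trans hm (hmin' u hu)) (E1aux_nonneg _))
  nlinarith
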